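/- For m ≡ 1, the potential ω_1(z) = ∫_ℝ (log|1-z/t| + χ(t)·Re(z)/t) dt equals π|Im z| for all z ∈ ℂ. -/

import Mathlib

open MeasureTheory

/-- `χ(t) = 1 - 1_{[-1,1]}(t)`. -/
noncomputable def chi (t : ℝ) : ℝ := if t ∈ Set.Icc (-1 : ℝ) 1 then 0 else 1

open Real Filter Set intervalIntegral Topology


lemma log_intInt (a b : ℝ) : IntervalIntegrable Real.log volume a b := by
  have key : ∀ c : ℝ, 0 ≤ c → IntervalIntegrable Real.log volume 0 c := by
    intro c hc
    rw [intervalIntegrable_iff, uIoc_of_le hc]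
    have hd : IntegrableOn (fun x : ℝ => x ^ (-1/2 : ℝ) * 2 + |Real.log (max c 1)|) (Ioc 0 c) := by
      apply Integrable.add
      · have := (intervalIntegrable_rpow' (r := -1/2) (by norm_num) (a := 0) (b := c)).mul_const 2
        rw [intervalIntegrable_iff, uIoc_of_le hc] at this
        exact this
      · exact integrableOn_const measure_Ioc_lt_top.ne
    refine Integrable.mono' hd Real.measurable_log.aestronglyMeasurable ?_
    refine (ae_restrict_iff' measurableSet_Ioc).2 (Eventually.of_forall ?_)
    intro x hx
    have hx0 : 0 < x := hx.1
    have hrp : (0:ℝ) < x ^ (-1/2 : ℝ) := Real.rpow_pos_of_pos hx0 _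
    rw [Real.norm_eq_abs]
    rcases le_or_gt x 1 with h1 | h1
    · have hlog : Real.log x ≤ 0 := Real.log_nonpos hx0.le h1
      rw [abs_of_nonpos hlog]
      have h2 : Real.log (x ^ (-1/2 : ℝ)) = (-1/2) * Real.log x := Real.log_rpow hx0 _
      have h3 : Real.log (x ^ (-1/2 : ℝ)) ≤ x ^ (-1/2 : ℝ) - 1 :=
        Real.log_le_sub_one_of_pos hrp
      have := abs_nonneg (Real.log (max c 1))
      nlinarith
    · have hlog : 0 ≤ Real.log x := Real.log_nonneg h1.le
      rw [abs_of_nonneg hlog]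
      have h2 : Real.log x ≤ |Real.log (max c 1)| :=
        le_trans (Real.log_le_log hx0 (le_max_of_le_left hx.2)) (le_abs_self _)
      nlinarith
  have key2 : ∀ c : ℝ, IntervalIntegrable Real.log volume 0 c := by
    intro c
    rcases le_or_gt 0 c with h | h
    · exact key c h
    · have h2 : IntervalIntegrable (fun x => Real.log (-x)) volume (-0) (-(-c)) :=
        (IntervalIntegrable.iff_comp_neg).mp (key (-c) (by linarith))
      simp only [neg_neg, neg_zero] at h2
      have heq : (fun x : ℝ => Real.log (-x)) = Real.log := funext fun x => Real.log_neg_eq_log x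
      rwa [heq] at h2
  exact (key2 a).symm.trans (key2 b)

lemma integral_log_all (a b : ℝ) :
    ∫ s in a..b, Real.log s = b * Real.log b - a * Real.log a - b + a := by
  have key : ∀ c : ℝ, 0 ≤ c → ∫ s in (0:ℝ)..c, Real.log s = c * Real.log c - c := by
    intro c hc
    rcases eq_or_lt_of_le hc with rfl | hc
    · simp
    have hcont : ContinuousOn (fun s : ℝ => s * Real.log s - s) (Icc 0 c) :=
      (Real.continuous_mul_log.sub continuous_id).continuousOn
    have hderiv : ∀ s ∈ Ioo (0:ℝ) c,
        HasDerivWithinAt (fun s : ℝ => s * Real.log s - s) (Real.log s) (Ioi s) s := by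
      intro s hs
      have h1 : HasDerivAt (fun s : ℝ => s * Real.log s - s) (Real.log s) s := by
        have := ((hasDerivAt_id s).mul (Real.hasDerivAt_log hs.1.ne')).sub (hasDerivAt_id s)
        refine this.congr_deriv ?_
        have : s ≠ 0 := hs.1.ne'
        simp [this]
      exact h1.hasDerivWithinAt
    have := integral_eq_sub_of_hasDeriv_right_of_le hc.le hcont hderiv (log_intInt 0 c)
    rw [this]
    simp
  have key2 : ∀ c : ℝ, ∫ s in (0:ℝ)..c, Real.log s = c * Real.log c - c := by
    intro c
    rcases le_or_gt 0 c with h | h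
    · exact key c h
    · have h1 : ∫ s in (0:ℝ)..(-c), Real.log s = (-c) * Real.log (-c) - (-c) := key _ (by linarith)
      have h2 : ∫ s in (0:ℝ)..(-c), Real.log (-s) = ∫ s in c..(0:ℝ), Real.log s := by
        rw [intervalIntegral.integral_comp_neg]
        norm_num
      simp only [Real.log_neg_eq_log] at h2
      rw [intervalIntegral.integral_symm c 0, ← h2, h1, Real.log_neg_eq_log]
      ring
  rw [← intervalIntegral.integral_add_adjacent_intervals (log_intInt a 0) (log_intInt 0 b),
    intervalIntegral.integral_symm, key2 a, key2 b]
  ring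

lemma chi_odd_integral (x R : ℝ) : ∫ t in (-R)..R, chi t * x / t = 0 := by
  have hodd : ∀ t : ℝ, chi (-t) * x / (-t) = -(chi t * x / t) := by
    intro t
    have hchi : chi (-t) = chi t := by
      unfold chi
      refine if_congr ?_ rfl rfl
      simp only [Set.mem_Icc]
      constructor <;> intro h <;> constructor <;> linarith [h.1, h.2]
    rw [hchi, div_neg]
  have h1 : (∫ t in (-R)..R, chi (-t) * x / (-t)) = ∫ t in (-R)..R, chi t * x / t := by
    simpa using intervalIntegral.integral_comp_neg (a := -R) (b := R) (fun t => chi t * x / t)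
  simp only [hodd, intervalIntegral.integral_neg] at h1
  linarith

lemma ftc_half_log_sq {x y : ℝ} (hy : y ≠ 0) (a b : ℝ) :
    ∫ t in a..b, (1/2 : ℝ) * Real.log ((t - x)^2 + y^2) =
      ((b - x) * ((1/2 : ℝ) * Real.log ((b - x)^2 + y^2)) + y * Real.arctan ((b - x)/y) - b)
      - ((a - x) * ((1/2 : ℝ) * Real.log ((a - x)^2 + y^2)) + y * Real.arctan ((a - x)/y) - a) := by
  have hD : ∀ t : ℝ, 0 < (t - x)^2 + y^2 := fun t => by positivity
  have hderiv : ∀ t : ℝ, HasDerivAt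
      (fun t : ℝ => (t - x) * ((1/2 : ℝ) * Real.log ((t - x)^2 + y^2))
        + y * Real.arctan ((t - x)/y) - t)
      ((1/2 : ℝ) * Real.log ((t - x)^2 + y^2)) t := by
    intro t
    have h1 : HasDerivAt (fun t : ℝ => t - x) 1 t := (hasDerivAt_id t).sub_const x
    have h2 : HasDerivAt (fun t : ℝ => (t - x)^2 + y^2) (2 * (t - x)) t := by
      have := (h1.pow 2).add_const (y^2)
      refine this.congr_deriv ?_
      ring
    have h3 : HasDerivAt (fun t : ℝ => Real.log ((t - x)^2 + y^2))
        ((2 * (t - x)) / ((t - x)^2 + y^2)) t := h2.log (hD t).ne'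
    have h4 : HasDerivAt (fun t : ℝ => (t - x)/y) (1/y) t := h1.div_const y
    have h5 : HasDerivAt (fun t : ℝ => Real.arctan ((t - x)/y))
        (1 / (1 + ((t - x)/y)^2) * (1/y)) t := h4.arctan
    have h6 := ((h1.mul (h3.const_mul (1/2 : ℝ))).add (h5.const_mul y)).sub (hasDerivAt_id t)
    refine h6.congr_deriv ?_
    have hD' : ((t - x)^2 + y^2) ≠ 0 := (hD t).ne'
    have h7 : 1 + ((t - x)/y)^2 ≠ 0 := by positivity
    field_simp
    ring
  have hcont : Continuous (fun t : ℝ => (1/2 : ℝ) * Real.log ((t - x)^2 + y^2)) := by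
    refine continuous_iff_continuousAt.2 fun t => ?_
    exact continuousAt_const.mul (ContinuousAt.log (by fun_prop) (hD t).ne')
  exact intervalIntegral.integral_eq_sub_of_hasDerivAt (fun t _ => hderiv t)
    (hcont.intervalIntegrable a b)

lemma lim_half (x y : ℝ) :
    Tendsto (fun R : ℝ => (R - x) * ((1/2 : ℝ) * Real.log ((R - x)^2 + y^2) - Real.log R))
      atTop (𝓝 (-x)) := by
  have hS2 : Tendsto (fun S : ℝ => S^2) atTop atTop := tendsto_pow_atTop two_ne_zero
  have hc : Tendsto (fun S : ℝ => S^2 * Real.log (1 + y^2/S^2)) atTop (𝓝 (y^2)) :=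
    (Real.tendsto_mul_log_one_add_div_atTop (y^2)).comp hS2
  have hφ : Tendsto (fun S : ℝ => S * ((1/2 : ℝ) * Real.log (1 + y^2/S^2))) atTop (𝓝 0) := by
    have h1 : Tendsto (fun S : ℝ => S⁻¹ * (S^2 * Real.log (1 + y^2/S^2)) * (1/2 : ℝ))
        atTop (𝓝 (0 * y^2 * (1/2 : ℝ))) :=
      (tendsto_inv_atTop_zero.mul hc).mul_const _
    rw [show (0 : ℝ) * y^2 * (1/2 : ℝ) = 0 by ring] at h1
    apply h1.congr'
    filter_upwards [eventually_ge_atTop (1 : ℝ)] with S hS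
    have hS0 : S ≠ 0 := by linarith
    field_simp
  have hB : Tendsto (fun R : ℝ => (R - x) * ((1/2 : ℝ) * Real.log (1 + y^2/(R - x)^2)))
      atTop (𝓝 0) := by
    have := hφ.comp (tendsto_atTop_add_const_right atTop (-x) tendsto_id)
    simpa [Function.comp_def, sub_eq_add_neg] using this
  have hA1 := Real.tendsto_mul_log_one_add_div_atTop (-x)
  have hA2 : Tendsto (fun R : ℝ => x * Real.log (1 + (-x)/R)) atTop (𝓝 0) := by
    have h1 : Tendsto (fun R : ℝ => 1 + (-x)/R) atTop (𝓝 1) := by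
      have : Tendsto (fun R : ℝ => (-x)/R) atTop (𝓝 0) := tendsto_const_nhds.div_atTop tendsto_id
      simpa using tendsto_const_nhds.add this
    have h2 : Tendsto (fun R : ℝ => Real.log (1 + (-x)/R)) atTop (𝓝 0) := by
      have := (Real.continuousAt_log one_ne_zero).tendsto.comp h1
      simpa [Function.comp_def] using this
    simpa using tendsto_const_nhds.mul h2
  have hsum := (hA1.sub hA2).add hB
  rw [show -x - 0 + 0 = -x by ring] at hsum
  apply hsum.congr'
  filter_upwards [eventually_ge_atTop (|x| + 1 : ℝ)] with R hR
  have hRx : 0 < R - x := by have := abs_le.1 (le_refl |x|); have := le_abs_self x; linarith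
  have hR0 : 0 < R := by have := neg_abs_le x; linarith
  have hkey : (1/2 : ℝ) * Real.log ((R - x)^2 + y^2) - Real.log R
      = Real.log (1 + (-x)/R) + (1/2 : ℝ) * Real.log (1 + y^2/(R - x)^2) := by
    have e1 : (R - x)^2 + y^2 = (R - x)^2 * (1 + y^2/(R - x)^2) := by
      field_simp
    have e2 : (0:ℝ) < 1 + y^2/(R - x)^2 := by positivity
    have e3 : Real.log ((R - x)^2) = 2 * Real.log (R - x) := by
      rw [Real.log_pow]
      norm_num
    have e4 : (1 : ℝ) + (-x)/R = (R - x)/R := by field_simp; ring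
    have e5 : Real.log ((R - x)/R) = Real.log (R - x) - Real.log R :=
      Real.log_div hRx.ne' hR0.ne'
    rw [e1, Real.log_mul (by positivity) e2.ne', e3, e4, e5]
    ring
  rw [hkey]
  ring

lemma lim_sum (x y : ℝ) :
    Tendsto (fun R : ℝ => (R - x) * ((1/2 : ℝ) * Real.log ((R - x)^2 + y^2) - Real.log R)
      + (R + x) * ((1/2 : ℝ) * Real.log ((R + x)^2 + y^2) - Real.log R)) atTop (𝓝 0) := by
  have := (lim_half x y).add (lim_half (-x) y)
  rw [show -x + -(-x) = (0:ℝ) by ring] at this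
  simpa [sub_neg_eq_add] using this

lemma lim_arctan {y : ℝ} (hy : y ≠ 0) (x : ℝ) :
    Tendsto (fun R : ℝ => y * (Real.arctan ((R - x)/y) + Real.arctan ((R + x)/y)))
      atTop (𝓝 (Real.pi * |y|)) := by
  rcases lt_or_gt_of_ne hy with hneg | hpos
  · have h1 : Tendsto (fun R : ℝ => (R - x)/y) atTop atBot := by
      have := (tendsto_atTop_add_const_right atTop (-x) tendsto_id).atTop_mul_const_of_neg
        (inv_lt_zero.2 hneg)
      simpa [sub_eq_add_neg, div_eq_mul_inv] using this
    have h2 : Tendsto (fun R : ℝ => (R + x)/y) atTop atBot := by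
      have := (tendsto_atTop_add_const_right atTop x tendsto_id).atTop_mul_const_of_neg
        (inv_lt_zero.2 hneg)
      simpa [div_eq_mul_inv] using this
    have ha1 := (tendsto_nhds_of_tendsto_nhdsWithin Real.tendsto_arctan_atBot).comp h1
    have ha2 := (tendsto_nhds_of_tendsto_nhdsWithin Real.tendsto_arctan_atBot).comp h2
    have h3 := (ha1.add ha2).const_mul y
    rw [show y * (-(Real.pi/2) + -(Real.pi/2)) = Real.pi * |y| by rw [abs_of_neg hneg]; ring] at h3
    simpa [Function.comp] using h3
  · have h1 : Tendsto (fun R : ℝ => (R - x)/y) atTop atTop := by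
      refine tendsto_atTop_atTop.2 fun b => ⟨b*y + x, fun a ha => ?_⟩
      rw [le_div_iff₀ hpos]; linarith
    have h2 : Tendsto (fun R : ℝ => (R + x)/y) atTop atTop := by
      refine tendsto_atTop_atTop.2 fun b => ⟨b*y - x, fun a ha => ?_⟩
      rw [le_div_iff₀ hpos]; linarith
    have ha1 := (tendsto_nhds_of_tendsto_nhdsWithin Real.tendsto_arctan_atTop).comp h1
    have ha2 := (tendsto_nhds_of_tendsto_nhdsWithin Real.tendsto_arctan_atTop).comp h2
    have h3 := (ha1.add ha2).const_mul y
    rw [show y * (Real.pi/2 + Real.pi/2) = Real.pi * |y| by rw [abs_of_pos hpos]; ring] at h3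
    simpa [Function.comp] using h3

lemma chi_measurable : Measurable chi := by
  unfold chi
  exact Measurable.ite measurableSet_Icc measurable_const measurable_const

lemma chi_intInt (x a b : ℝ) : IntervalIntegrable (fun t => chi t * x / t) volume a b := by
  refine IntervalIntegrable.mono_fun' (g := fun _ => |x|) (intervalIntegrable_const)
    ?_ ?_
  · have heq : (fun t => chi t * x / t) = fun t => chi t * x * t⁻¹ :=
      funext fun t => div_eq_mul_inv _ _
    rw [heq]
    exact ((chi_measurable.mul measurable_const).mul measurable_inv).aestronglyMeasurable
  · filter_upwards with t
    rw [Real.norm_eq_abs]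
    unfold chi
    by_cases h : t ∈ Set.Icc (-1:ℝ) 1
    · simp [h]
    · simp only [h, if_false]
      have ht : 1 < |t| := by
        simp only [Set.mem_Icc, not_and_or, not_le] at h
        rcases h with h | h
        · rw [abs_of_neg (by linarith)]; linarith
        · rw [abs_of_pos (by linarith)]; linarith
      rw [one_mul, abs_div]
      exact div_le_self (abs_nonneg x) ht.le

lemma cont_half_log {x y : ℝ} (hy : y ≠ 0) :
    Continuous (fun t : ℝ => (1/2 : ℝ) * Real.log ((t - x)^2 + y^2)) := by
  have hD : ∀ t : ℝ, 0 < (t - x)^2 + y^2 := fun t => by positivity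
  refine continuous_iff_continuousAt.2 fun t => ?_
  exact continuousAt_const.mul (ContinuousAt.log (by fun_prop) (hD t).ne')

lemma lim_integral (x y : ℝ) :
    Tendsto (fun R : ℝ => ∫ t in (-R)..R,
      ((1/2 : ℝ) * Real.log ((t - x)^2 + y^2) - Real.log t + chi t * x / t))
      atTop (𝓝 (Real.pi * |y|)) := by
  by_cases hy : y = 0
  · subst hy
    rw [show Real.pi * |(0:ℝ)| = 0 by simp]
    apply (lim_sum x 0).congr'
    apply Filter.Eventually.of_forall
    intro R
    have h1eq : ∀ u : ℝ, (1/2 : ℝ) * Real.log (u^2 + (0:ℝ)^2) = Real.log u := by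
      intro u
      rw [show u^2 + (0:ℝ)^2 = u^2 by ring, Real.log_pow]
      push_cast
      ring
    simp only [h1eq]
    have i1 : IntervalIntegrable (fun t => Real.log (t - x)) volume (-R) R := by
      have := (log_intInt (-R - x) (R - x)).comp_sub_right x
      simpa using this
    have i2 := log_intInt (-R) R
    have i3 := chi_intInt x (-R) R
    rw [intervalIntegral.integral_add (i1.sub i2) i3, intervalIntegral.integral_sub i1 i2,
      chi_odd_integral x R,
      intervalIntegral.integral_comp_sub_right (fun s => Real.log s) x,
      integral_log_all, integral_log_all,
      show Real.log (-R - x) = Real.log (R + x) from by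
        rw [show -R - x = -(R + x) by ring, Real.log_neg_eq_log],
      Real.log_neg_eq_log R]
    ring
  · have h := (lim_sum x y).add (lim_arctan hy x)
    rw [zero_add] at h
    apply h.congr'
    apply Filter.Eventually.of_forall
    intro R
    dsimp only
    have i1 : IntervalIntegrable (fun t : ℝ => (1/2 : ℝ) * Real.log ((t - x)^2 + y^2)) volume (-R) R := (cont_half_log (x := x) hy).intervalIntegrable (-R) R
    have i2 := log_intInt (-R) R
    have i3 := chi_intInt x (-R) R
    rw [intervalIntegral.integral_add (i1.sub i2) i3, intervalIntegral.integral_sub i1 i2,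
      chi_odd_integral x R, ftc_half_log_sq hy (-R) R,
      integral_log_all, Real.log_neg_eq_log R]
    rw [show (-R - x)/y = -((R + x)/y) by ring, Real.arctan_neg]
    ring

lemma f_eq_g (z : ℂ) {t : ℝ} (ht : t ≠ 0) (htz : (t : ℂ) ≠ z) :
    Real.log (‖1 - z / (t : ℂ)‖) =
      (1/2 : ℝ) * Real.log ((t - z.re)^2 + z.im^2) - Real.log t := by
  have htC : (t : ℂ) ≠ 0 := Complex.ofReal_ne_zero.2 ht
  have h1 : (1 : ℂ) - z / t = ((t : ℂ) - z) / t := by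
    field_simp
  have habs : ‖(t : ℂ) - z‖ = Real.sqrt ((t - z.re)^2 + z.im^2) := by
    rw [Complex.norm_def, Complex.normSq_apply]
    congr 1
    simp only [Complex.sub_re, Complex.sub_im, Complex.ofReal_re, Complex.ofReal_im]
    ring
  have hne : ‖(t : ℂ) - z‖ ≠ 0 :=
    norm_ne_zero_iff.mpr (sub_ne_zero.2 htz)
  rw [h1, norm_div, Real.log_div hne (by simpa using htC), habs,
    Real.log_sqrt (by positivity), Complex.norm_real, Real.norm_eq_abs, Real.log_abs]
  ring

lemma f_ae_eq (z : ℂ) : ∀ᵐ t : ℝ,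
    Real.log (‖1 - z / (t : ℂ)‖) + chi t * z.re / t
      = (1/2 : ℝ) * Real.log ((t - z.re)^2 + z.im^2) - Real.log t + chi t * z.re / t := by
  have h0 : ∀ᵐ t : ℝ, t ≠ 0 := by
    rw [ae_iff]
    simpa using measure_singleton (0 : ℝ)
  have h1 : ∀ᵐ t : ℝ, t ≠ z.re := by
    rw [ae_iff]
    simpa using measure_singleton (z.re)
  filter_upwards [h0, h1] with t ht ht1
  have htz : (t : ℂ) ≠ z := by
    intro h
    apply ht1
    rw [← h, Complex.ofReal_re]
  rw [f_eq_g z ht htz]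

lemma f_meas (z : ℂ) : AEStronglyMeasurable
    (fun t : ℝ => Real.log (‖1 - z / (t : ℂ)‖) + chi t * z.re / t) volume := by
  apply Measurable.aestronglyMeasurable
  apply Measurable.add
  · have heq : (fun t : ℝ => Real.log (‖1 - z / (t : ℂ)‖))
        = fun t : ℝ => Real.log (‖1 - z * ((t⁻¹ : ℝ) : ℂ)‖) := by
      funext t
      rw [div_eq_mul_inv, Complex.ofReal_inv]
    rw [heq]
    exact Real.measurable_log.comp (continuous_norm.measurable.comp
      (measurable_const.sub (measurable_const.mul
        (Complex.measurable_ofReal.comp measurable_inv))))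
  · have heq : (fun t : ℝ => chi t * z.re / t) = fun t => chi t * z.re * t⁻¹ :=
      funext fun t => div_eq_mul_inv _ _
    rw [heq]
    exact (chi_measurable.mul measurable_const).mul measurable_inv

lemma f_integrable (z : ℂ) : Integrable
    (fun t : ℝ => Real.log (‖1 - z / (t : ℂ)‖) + chi t * z.re / t) volume := by
  set x := z.re with hx
  set y := z.im with hyy
  set A : ℝ := 2 * ‖z‖ + 2 with hA
  have hA2 : (2 : ℝ) ≤ A := by
    have := norm_nonneg z
    simp only [hA]; linarith
  have hAz : 2 * ‖z‖ < A := by simp only [hA]; linarith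
  have hA0 : (0 : ℝ) < A := by linarith
  -- integrability on the compact part
  have hcomp : IntegrableOn
      (fun t : ℝ => Real.log (‖1 - z / (t : ℂ)‖) + chi t * z.re / t)
      (Set.Icc (-A) A) volume := by
    have hgi : IntervalIntegrable
        (fun t : ℝ => (1/2 : ℝ) * Real.log ((t - x)^2 + y^2) - Real.log t + chi t * x / t)
        volume (-A) A := by
      have i2 := log_intInt (-A) A
      have i3 := chi_intInt x (-A) A
      by_cases hy : y = 0
      · rw [hy]
        have h1eq : (fun t : ℝ => (1/2 : ℝ) * Real.log ((t - x)^2 + (0:ℝ)^2) - Real.log t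
            + chi t * x / t) = fun t => Real.log (t - x) - Real.log t + chi t * x / t := by
          funext u
          rw [show (u - x)^2 + (0:ℝ)^2 = (u - x)^2 by ring, Real.log_pow]
          push_cast
          ring
        rw [h1eq]
        have i1 : IntervalIntegrable (fun t => Real.log (t - x)) volume (-A) A := by
          have := (log_intInt (-A - x) (A - x)).comp_sub_right x
          simpa using this
        exact (i1.sub i2).add i3
      · exact (((cont_half_log (x := x) hy).intervalIntegrable (-A) A).sub i2).add i3
    have hgOn : IntegrableOn
        (fun t : ℝ => (1/2 : ℝ) * Real.log ((t - x)^2 + y^2) - Real.log t + chi t * x / t)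
        (Set.Icc (-A) A) volume := by
      rw [integrableOn_Icc_iff_integrableOn_Ioc]
      have := hgi.def'
      rwa [uIoc_of_le (by linarith : -A ≤ A)] at this
    exact hgOn.congr_fun_ae (ae_restrict_of_ae ((f_ae_eq z).mono fun t ht => ht.symm))
  -- integrability on the tail
  have htail : IntegrableOn
      (fun t : ℝ => Real.log (‖1 - z / (t : ℂ)‖) + chi t * z.re / t)
      (Set.Icc (-A) A)ᶜ volume := by
    have hdom : IntegrableOn (fun t : ℝ => 2 * ‖z‖ ^ 2 * (1 + t^2)⁻¹)
        (Set.Icc (-A) A)ᶜ volume :=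
      (integrable_inv_one_add_sq.const_mul _).integrableOn
    refine hdom.integrable.mono' ((f_meas z).restrict) ?_
    rw [ae_restrict_iff' measurableSet_Icc.compl]
    refine Filter.Eventually.of_forall fun t ht => ?_
    have htA : A < |t| := by
      rw [Set.mem_compl_iff, Set.mem_Icc, not_and_or, not_le, not_le] at ht
      rcases ht with h | h
      · rw [abs_of_neg (by linarith)]; linarith
      · rw [abs_of_pos (by linarith)]; linarith
    have ht0 : t ≠ 0 := by
      intro h; rw [h] at htA; simp at htA; linarith
    have htC : (t : ℂ) ≠ 0 := Complex.ofReal_ne_zero.2 ht0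
    have hchi : chi t = 1 := by
      unfold chi
      rw [if_neg]
      intro h
      have : |t| ≤ 1 := abs_le.2 ⟨h.1, h.2⟩
      linarith
    set w : ℂ := -(z / (t : ℂ)) with hw
    have hwnorm : ‖w‖ = ‖z‖ / |t| := by
      rw [hw, norm_neg, norm_div, Complex.norm_real,
        Real.norm_eq_abs]
    have hwhalf : ‖w‖ ≤ 1/2 := by
      rw [hwnorm, div_le_iff₀ (by linarith : (0:ℝ) < |t|)]
      nlinarith
    have hw1 : ‖w‖ < 1 := by linarith
    have hre : (z / (t : ℂ)).re = z.re * t⁻¹ := by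
      rw [div_eq_mul_inv, ← Complex.ofReal_inv]
      simp [Complex.mul_re]
    have hfval : Real.log (‖1 - z / (t : ℂ)‖) + chi t * z.re / t
        = (Complex.log (1 + w) - w).re := by
      rw [hchi, one_mul]
      have h1 : (1 : ℂ) - z / t = 1 + w := by rw [hw]; ring
      rw [h1, Complex.sub_re, ← Complex.log_re, hw, Complex.neg_re, hre, div_eq_mul_inv]
      ring
    rw [Real.norm_eq_abs, hfval]
    have hb1 : |(Complex.log (1 + w) - w).re| ≤ ‖Complex.log (1 + w) - w‖ :=
      Complex.abs_re_le_norm _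
    have hb2 := Complex.norm_log_one_add_sub_self_le hw1
    have hb3 : ‖w‖^2 * (1 - ‖w‖)⁻¹ / 2 ≤ ‖w‖^2 := by
      have h4 : (1 - ‖w‖)⁻¹ ≤ 2 := by
        rw [inv_le_comm₀ (by linarith) (by norm_num)]
        linarith
      nlinarith [sq_nonneg ‖w‖]
    have hb4 : ‖w‖^2 ≤ 2 * ‖z‖ ^ 2 * (1 + t^2)⁻¹ := by
      have h5 : (1 : ℝ) ≤ t^2 := by nlinarith [htA, hA2, abs_nonneg t, sq_abs t]
      have h6 : (0:ℝ) < 1 + t^2 := by positivity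
      rw [hwnorm, div_pow, sq_abs, div_le_iff₀ (by positivity : (0:ℝ) < t^2)]
      have h9 : (1 + t^2)⁻¹ ≤ 1/2 := by
        rw [inv_le_comm₀ h6 (by norm_num)]
        norm_num
        linarith
      have h10 : (1 + t^2)⁻¹ * t^2 = 1 - (1 + t^2)⁻¹ := by field_simp; ring
      nlinarith [sq_nonneg (‖z‖), h9, h10]
    linarith
  have := hcomp.union htail
  rwa [Set.union_compl_self, integrableOn_univ] at this

theorem stmt4 (z : ℂ) :
    (∫ t : ℝ, (Real.log (‖1 - z / (t : ℂ)‖) + chi t * z.re / t)) =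
      Real.pi * |z.im| := by
  have hInt := f_integrable z
  have hlim1 := MeasureTheory.intervalIntegral_tendsto_integral hInt
    tendsto_neg_atTop_atBot (tendsto_id (α := ℝ))
  have hae := f_ae_eq z
  have hlim2 : Tendsto (fun R : ℝ => ∫ t in (-R)..R,
      (Real.log (‖1 - z / (t : ℂ)‖) + chi t * z.re / t))
      atTop (𝓝 (Real.pi * |z.im|)) := by
    apply (lim_integral z.re z.im).congr'
    refine Filter.Eventually.of_forall fun R => ?_
    exact intervalIntegral.integral_congr_ae (hae.mono fun t ht _ => ht.symm)
  exact tendsto_nhds_unique (hlim1.congr fun R => rfl) hlim2
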